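/- Let G = (V,E,ν,μ) be a connected locally finite weighted graph with sup_x deg_x/ν_x < ∞ and positive ℓ² spectral gap (i.e. ‖f‖_{ℓ²(V,ν)} ≤ C‖|Df|‖_{ℓ²(E,μ)} for all finitely supported f). Then for every p ∈ [1,∞) the norms ‖|Df|‖_{ℓ^p(E,μ)} and ‖f‖_{ℓ^p(V,ν)} are equivalent on finitely supported functions: there exist constants c, C > 0 with c‖f‖_{ℓ^p(V,ν)} ≤ ‖|Df|‖_{ℓ^p(E,μ)} ≤ C‖f‖_{ℓ^p(V,ν)}. -/

import Mathlib

open Finset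

private lemma rpow_add_le_add_rpow_real {x y r : ℝ} (hx : 0 ≤ x) (hy : 0 ≤ y)
    (hr0 : 0 ≤ r) (hr1 : r ≤ 1) : (x + y) ^ r ≤ x ^ r + y ^ r := by
  lift x to NNReal using hx
  lift y to NNReal using hy
  have := NNReal.rpow_add_le_add_rpow x y hr0 hr1
  exact_mod_cast this

private lemma abs_rpow_sub_rpow_le {u v r : ℝ} (hu : 0 ≤ u) (hv : 0 ≤ v)
    (hr0 : 0 < r) (hr1 : r ≤ 1) : |u ^ r - v ^ r| ≤ |u - v| ^ r := by
  have key : ∀ a b : ℝ, 0 ≤ b → b ≤ a → a ^ r - b ^ r ≤ (a - b) ^ r := by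
    intro a b hb hba
    have h := rpow_add_le_add_rpow_real (x := a - b) (y := b) (by linarith) hb hr0.le hr1
    rw [sub_add_cancel] at h
    linarith
  rcases le_total v u with h | h
  · rw [abs_of_nonneg (sub_nonneg.mpr (Real.rpow_le_rpow hv h hr0.le)),
      abs_of_nonneg (sub_nonneg.mpr h)]
    exact key u v hv h
  · rw [abs_sub_comm, abs_sub_comm u v,
      abs_of_nonneg (sub_nonneg.mpr (Real.rpow_le_rpow hu h hr0.le)),
      abs_of_nonneg (sub_nonneg.mpr h)]
    exact key v u hu h

private lemma sq_rpow_sub_le_small {a b r : ℝ} (hr0 : 0 < r) (hr1 : r ≤ 1) :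
    (|a| ^ r - |b| ^ r) ^ 2 ≤ |a - b| ^ (r * 2) := by
  have h1 : |(|a| ^ r - |b| ^ r)| ≤ (abs (|a| - |b|)) ^ r :=
    abs_rpow_sub_rpow_le (abs_nonneg a) (abs_nonneg b) hr0 hr1
  have h2 : (abs (|a| - |b|)) ^ r ≤ |a - b| ^ r :=
    Real.rpow_le_rpow (abs_nonneg _) (abs_abs_sub_abs_le_abs_sub a b) hr0.le
  have h3 : |(|a| ^ r - |b| ^ r)| ^ 2 ≤ (|a - b| ^ r) ^ 2 :=
    pow_le_pow_left₀ (abs_nonneg _) (h1.trans h2) 2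
  rw [sq_abs] at h3
  refine h3.trans_eq ?_
  rw [← Real.rpow_natCast (|a - b| ^ r) 2, ← Real.rpow_mul (abs_nonneg _)]
  norm_num

private lemma sq_rpow_sub_le_big {u v r : ℝ} (hu : 0 ≤ u) (hv : 0 ≤ v) (hr : 1 ≤ r) :
    (u ^ r - v ^ r) ^ 2 ≤ r ^ 2 * (u ^ (2 * r - 2) + v ^ (2 * r - 2)) * (u - v) ^ 2 := by
  have aux : ∀ a b : ℝ, 0 ≤ b → b ≤ a →
      (a ^ r - b ^ r) ^ 2 ≤ r ^ 2 * (a ^ (2 * r - 2) + b ^ (2 * r - 2)) * (a - b) ^ 2 := by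
    intro a b hb hba
    rcases eq_or_lt_of_le (hb.trans hba) with h0 | ha0
    · have hb0 : b = 0 := le_antisymm (h0 ▸ hba) hb
      rw [← h0, hb0]
      norm_num
    · -- 0 < a
      have key : a ^ r - b ^ r ≤ r * a ^ (r - 1) * (a - b) := by
        have hs : -1 ≤ b / a - 1 := by
          have : 0 ≤ b / a := div_nonneg hb ha0.le
          linarith
        have hb' := one_add_mul_self_le_rpow_one_add hs hr
        have he : 1 + (b / a - 1) = b / a := by ring
        rw [he, Real.div_rpow hb ha0.le] at hb'
        have har : 0 < a ^ r := Real.rpow_pos_of_pos ha0 r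
        have hb2 := mul_le_mul_of_nonneg_left hb' har.le
        have he2 : a ^ r * (b ^ r / a ^ r) = b ^ r := by field_simp
        rw [he2] at hb2
        have hu1 : a ^ (r - 1) * a = a ^ r := by
          rw [← Real.rpow_add_one ha0.ne' (r - 1)]
          ring_nf
        have hvu : a ^ r * (b / a) = b * a ^ (r - 1) := by
          rw [← hu1]; field_simp
        have e1 : a ^ r * (1 + r * (b / a - 1))
            = a ^ r + r * (a ^ r * (b / a)) - r * a ^ r := by ring
        rw [e1, hvu] at hb2
        nlinarith [hb2, hu1]
      have h1 : 0 ≤ a ^ r - b ^ r :=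
        sub_nonneg.mpr (Real.rpow_le_rpow hb hba (le_trans zero_le_one hr))
      have h2 : (a ^ r - b ^ r) ^ 2 ≤ (r * a ^ (r - 1) * (a - b)) ^ 2 := by
        apply sq_le_sq' (by linarith) key
      have h4 : (a ^ (r - 1)) ^ 2 = a ^ (2 * r - 2) := by
        rw [← Real.rpow_natCast (a ^ (r - 1)) 2, ← Real.rpow_mul ha0.le]
        norm_num
        ring_nf
      have h3 : (r * a ^ (r - 1) * (a - b)) ^ 2 = r ^ 2 * a ^ (2 * r - 2) * (a - b) ^ 2 := by
        rw [← h4]; ring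
      rw [h3] at h2
      have h5 : 0 ≤ r ^ 2 * b ^ (2 * r - 2) * (a - b) ^ 2 := by positivity
      nlinarith [h2, h5]
  rcases le_total v u with h | h
  · exact aux u v hv h
  · have := aux v u hu h
    calc (u ^ r - v ^ r) ^ 2 = (v ^ r - u ^ r) ^ 2 := by ring
      _ ≤ r ^ 2 * (v ^ (2 * r - 2) + u ^ (2 * r - 2)) * (v - u) ^ 2 := this
      _ = r ^ 2 * (u ^ (2 * r - 2) + v ^ (2 * r - 2)) * (u - v) ^ 2 := by ring

private lemma abs_sub_rpow_le_two_rpow {a b p : ℝ} (hp : 0 < p) :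
    |a - b| ^ p ≤ 2 ^ p * (|a| ^ p + |b| ^ p) := by
  have h1 : |a - b| ≤ 2 * max |a| |b| := by
    have := abs_sub a b
    have h2 : |a| ≤ max |a| |b| := le_max_left _ _
    have h3 : |b| ≤ max |a| |b| := le_max_right _ _
    linarith
  have h2 : |a - b| ^ p ≤ (2 * max |a| |b|) ^ p :=
    Real.rpow_le_rpow (abs_nonneg _) h1 hp.le
  have h3 : (2 * max |a| |b|) ^ p = 2 ^ p * (max |a| |b|) ^ p :=
    Real.mul_rpow (by norm_num) (le_max_of_le_left (abs_nonneg a))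
  have h4 : (max |a| |b|) ^ p ≤ |a| ^ p + |b| ^ p := by
    rcases max_cases |a| |b| with ⟨he, _⟩ | ⟨he, _⟩ <;> rw [he]
    · nlinarith [Real.rpow_nonneg (abs_nonneg b) p]
    · nlinarith [Real.rpow_nonneg (abs_nonneg a) p]
  calc |a - b| ^ p ≤ 2 ^ p * (max |a| |b|) ^ p := h3 ▸ h2
    _ ≤ 2 ^ p * (|a| ^ p + |b| ^ p) := by
        have : (0:ℝ) ≤ 2 ^ p := Real.rpow_nonneg (by norm_num) p
        nlinarith
set_option maxHeartbeats 2000000 in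
theorem edge_norm_equiv_vertex_norm_of_spectral_gap {V : Type*} (ν : V → ℝ) (μ : V → V → ℝ)
    (hν : ∀ x, 0 < ν x) (hsymm : ∀ x y, μ x y = μ y x) (hnn : ∀ x y, 0 ≤ μ x y)
    (hloc : ∀ x, (Function.support (μ x)).Finite)
    (hconn : ∀ x y : V, Relation.ReflTransGen (fun a b => 0 < μ a b) x y)
    (hM : ∃ M : ℝ, ∀ x, (∑' y, μ x y) / ν x ≤ M)
    (hgap : ∃ C₂ : ℝ, 0 < C₂ ∧ ∀ f : V → ℝ, (Function.support f).Finite →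
      Real.sqrt (∑' x, f x ^ 2 * ν x)
        ≤ C₂ * Real.sqrt ((1 / 2) * ∑' x, ∑' y, μ x y * (f x - f y) ^ 2))
    (p : ℝ) (hp : 1 ≤ p) :
    ∃ c C : ℝ, 0 < c ∧ 0 < C ∧ ∀ f : V → ℝ, (Function.support f).Finite →
      c * (∑' x, |f x| ^ p * ν x) ^ (1 / p)
          ≤ ((1 / 2) * ∑' x, ∑' y, μ x y * |f x - f y| ^ p) ^ (1 / p) ∧
        ((1 / 2) * ∑' x, ∑' y, μ x y * |f x - f y| ^ p) ^ (1 / p)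
          ≤ C * (∑' x, |f x| ^ p * ν x) ^ (1 / p) := by
  classical
  obtain ⟨M, hM⟩ := hM
  obtain ⟨C₂, hC₂, hgap⟩ := hgap
  have hp0 : 0 < p := lt_of_lt_of_le one_pos hp
  set M' : ℝ := max M 1 with hM'def
  have hM'pos : 0 < M' := lt_of_lt_of_le one_pos (le_max_right _ _)
  have hdeg : ∀ x, (∑' y, μ x y) ≤ M' * ν x := by
    intro x
    have h1 : (∑' y, μ x y) / ν x ≤ M' := (hM x).trans (le_max_left _ _)
    exact (div_le_iff₀ (hν x)).mp h1
  set r : ℝ := p / 2 with hrdef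
  have hr0 : 0 < r := by positivity
  set K : ℝ := C₂ ^ 2 * r ^ 2 * M' ^ ((p - 2) / p) * 2 ^ (2 / p) with hKdef
  have hKpos : 0 < K := by positivity
  -- main estimates
  have main : ∀ f : V → ℝ, (Function.support f).Finite →
      0 ≤ (∑' x, |f x| ^ p * ν x) ∧
      0 ≤ ((1 / 2) * ∑' x, ∑' y, μ x y * |f x - f y| ^ p) ∧
      ((1 / 2) * ∑' x, ∑' y, μ x y * |f x - f y| ^ p)
          ≤ 2 ^ p * M' * (∑' x, |f x| ^ p * ν x) ∧
      (p ≤ 2 → (∑' x, |f x| ^ p * ν x)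
          ≤ C₂ ^ 2 * ((1 / 2) * ∑' x, ∑' y, μ x y * |f x - f y| ^ p)) ∧
      (2 < p → (∑' x, |f x| ^ p * ν x)
          ≤ K * (∑' x, |f x| ^ p * ν x) ^ ((p - 2) / p)
              * ((1 / 2) * ∑' x, ∑' y, μ x y * |f x - f y| ^ p) ^ (2 / p)) := by
    intro f hf
    set F : Finset V := hf.toFinset with hFdef
    set N : Finset V := F ∪ F.biUnion (fun x => (hloc x).toFinset) with hNdef
    have hfN : ∀ x, x ∉ N → f x = 0 := by
      intro x hx
      by_contra h
      exact hx (Finset.mem_union_left _ (hf.mem_toFinset.mpr h))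
    have hmem : ∀ x y, μ x y ≠ 0 → (f x ≠ 0 ∨ f y ≠ 0) → x ∈ N ∧ y ∈ N := by
      intro x y hμ hfxy
      have hsymm' : μ y x ≠ 0 := by rw [← hsymm]; exact hμ
      rcases hfxy with hx | hy
      · have hxF : x ∈ F := hf.mem_toFinset.mpr hx
        refine ⟨Finset.mem_union_left _ hxF, Finset.mem_union_right _ ?_⟩
        exact Finset.mem_biUnion.mpr ⟨x, hxF, (hloc x).mem_toFinset.mpr hμ⟩
      · have hyF : y ∈ F := hf.mem_toFinset.mpr hy
        refine ⟨Finset.mem_union_right _ ?_, Finset.mem_union_left _ hyF⟩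
        exact Finset.mem_biUnion.mpr ⟨y, hyF, (hloc y).mem_toFinset.mpr hsymm'⟩
    have hdouble : ∀ t : V → V → ℝ, (∀ x y, f x = 0 → f y = 0 → t x y = 0) →
        (∀ x y, μ x y = 0 → t x y = 0) →
        (∑' x, ∑' y, t x y) = ∑ x ∈ N, ∑ y ∈ N, t x y := by
      intro t ht hμt
      have hkey : ∀ x y, t x y ≠ 0 → x ∈ N ∧ y ∈ N := by
        intro x y hne
        have hμ : μ x y ≠ 0 := fun h => hne (hμt x y h)
        have hfxy : f x ≠ 0 ∨ f y ≠ 0 := by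
          by_contra hcon
          push_neg at hcon
          exact hne (ht x y hcon.1 hcon.2)
        exact hmem x y hμ hfxy
      have houter : ∀ x, x ∉ N → (∑' y, t x y) = 0 := by
        intro x hx
        have hz : ∀ y, t x y = 0 := fun y => by
          by_contra h; exact hx (hkey x y h).1
        simp [hz]
      rw [tsum_eq_sum houter]
      refine Finset.sum_congr rfl fun x hx => ?_
      exact tsum_eq_sum fun y hy => by
        by_contra h; exact hy (hkey x y h).2
    -- vertex sum
    have heqA : (∑' x, |f x| ^ p * ν x) = ∑ x ∈ N, |f x| ^ p * ν x := by
      apply tsum_eq_sum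
      intro x hx
      rw [hfN x hx]
      simp [Real.zero_rpow hp0.ne']
    have heqB : (∑' x, ∑' y, μ x y * |f x - f y| ^ p)
        = ∑ x ∈ N, ∑ y ∈ N, μ x y * |f x - f y| ^ p := by
      apply hdouble
      · intro x y hx hy; rw [hx, hy]; simp [Real.zero_rpow hp0.ne']
      · intro x y h; rw [h]; ring
    set Af : ℝ := ∑ x ∈ N, |f x| ^ p * ν x with hAfdef
    set Bs : ℝ := ∑ x ∈ N, ∑ y ∈ N, μ x y * |f x - f y| ^ p with hBsdef
    have hAf0 : 0 ≤ Af :=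
      Finset.sum_nonneg fun x _ => mul_nonneg (Real.rpow_nonneg (abs_nonneg _) p) (hν x).le
    have hBs0 : 0 ≤ Bs :=
      Finset.sum_nonneg fun x _ => Finset.sum_nonneg fun y _ =>
        mul_nonneg (hnn x y) (Real.rpow_nonneg (abs_nonneg _) p)
    -- degree bound on N
    have hdegN : ∀ x, (∑ y ∈ N, μ x y) ≤ M' * ν x := by
      intro x
      have hsub : (∑ y ∈ N, μ x y) ≤ ∑ y ∈ N ∪ (hloc x).toFinset, μ x y :=
        Finset.sum_le_sum_of_subset_of_nonneg Finset.subset_union_left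
          (fun y _ _ => hnn x y)
      have he : (∑' y, μ x y) = ∑ y ∈ N ∪ (hloc x).toFinset, μ x y := by
        apply tsum_eq_sum
        intro y hy
        have h1 : y ∉ (hloc x).toFinset := fun h => hy (Finset.mem_union_right _ h)
        rw [(hloc x).mem_toFinset] at h1
        exact Function.notMem_support.mp h1
      calc (∑ y ∈ N, μ x y) ≤ ∑ y ∈ N ∪ (hloc x).toFinset, μ x y := hsub
        _ = ∑' y, μ x y := he.symm
        _ ≤ M' * ν x := hdeg x
    -- S1 bound
    have hS1 : (∑ x ∈ N, ∑ y ∈ N, μ x y * |f x| ^ p) ≤ M' * Af := by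
      have hterm : ∀ x ∈ N, (∑ y ∈ N, μ x y * |f x| ^ p) ≤ M' * (|f x| ^ p * ν x) := by
        intro x _
        rw [← Finset.sum_mul]
        calc (∑ y ∈ N, μ x y) * |f x| ^ p ≤ (M' * ν x) * |f x| ^ p :=
              mul_le_mul_of_nonneg_right (hdegN x) (Real.rpow_nonneg (abs_nonneg _) p)
          _ = M' * (|f x| ^ p * ν x) := by ring
      calc (∑ x ∈ N, ∑ y ∈ N, μ x y * |f x| ^ p) ≤ ∑ x ∈ N, M' * (|f x| ^ p * ν x) :=
            Finset.sum_le_sum hterm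
        _ = M' * Af := by rw [← Finset.mul_sum]
    have hS2eq : (∑ x ∈ N, ∑ y ∈ N, μ x y * |f y| ^ p)
        = ∑ x ∈ N, ∑ y ∈ N, μ x y * |f x| ^ p := by
      rw [Finset.sum_comm]
      exact Finset.sum_congr rfl fun x _ => Finset.sum_congr rfl fun y _ => by rw [hsymm]
    -- upper bound
    have hupper : (1 / 2) * Bs ≤ 2 ^ p * M' * Af := by
      have h2p : (0:ℝ) < 2 ^ p := Real.rpow_pos_of_pos (by norm_num) p
      have h1 : Bs ≤ ∑ x ∈ N, ∑ y ∈ N,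
          (2 ^ p * (μ x y * |f x| ^ p) + 2 ^ p * (μ x y * |f y| ^ p)) := by
        apply Finset.sum_le_sum
        intro x _
        apply Finset.sum_le_sum
        intro y _
        have h3 := abs_sub_rpow_le_two_rpow (a := f x) (b := f y) hp0
        calc μ x y * |f x - f y| ^ p ≤ μ x y * (2 ^ p * (|f x| ^ p + |f y| ^ p)) :=
              mul_le_mul_of_nonneg_left h3 (hnn x y)
          _ = 2 ^ p * (μ x y * |f x| ^ p) + 2 ^ p * (μ x y * |f y| ^ p) := by ring
      have h2 : (∑ x ∈ N, ∑ y ∈ N,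
          (2 ^ p * (μ x y * |f x| ^ p) + 2 ^ p * (μ x y * |f y| ^ p)))
          = 2 ^ p * (∑ x ∈ N, ∑ y ∈ N, μ x y * |f x| ^ p)
            + 2 ^ p * (∑ x ∈ N, ∑ y ∈ N, μ x y * |f y| ^ p) := by
        simp only [Finset.sum_add_distrib, Finset.mul_sum]
      rw [h2, hS2eq] at h1
      have h4 := mul_le_mul_of_nonneg_left hS1 h2p.le
      linarith
    -- gap function
    set g : V → ℝ := fun x => |f x| ^ r with hgdef
    have hg0 : ∀ x, f x = 0 → g x = 0 := by
      intro x hx; simp [hgdef, hx, Real.zero_rpow hr0.ne']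
    have hgsupp : (Function.support g).Finite := by
      apply hf.subset
      intro x hx
      simp only [Function.mem_support] at hx ⊢
      intro h; exact hx (hg0 x h)
    have hg2 : ∀ x, g x ^ 2 = |f x| ^ p := by
      intro x
      calc g x ^ 2 = (|f x| ^ r) ^ ((2:ℕ):ℝ) := by
            rw [Real.rpow_natCast]
        _ = |f x| ^ (r * 2) := (Real.rpow_mul (abs_nonneg _) _ _).symm
        _ = |f x| ^ p := by rw [hrdef]; ring_nf
    have heqA2 : (∑' x, g x ^ 2 * ν x) = Af := by
      rw [show (∑' x, g x ^ 2 * ν x) = ∑' x, |f x| ^ p * ν x by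
        exact tsum_congr fun x => by rw [hg2], heqA]
    set Eg : ℝ := ∑ x ∈ N, ∑ y ∈ N, μ x y * (g x - g y) ^ 2 with hEgdef
    have heqE : (∑' x, ∑' y, μ x y * (g x - g y) ^ 2) = Eg := by
      apply hdouble
      · intro x y hx hy; rw [hg0 x hx, hg0 y hy]; ring
      · intro x y h; rw [h]; ring
    have hEg0 : 0 ≤ Eg :=
      Finset.sum_nonneg fun x _ => Finset.sum_nonneg fun y _ =>
        mul_nonneg (hnn x y) (sq_nonneg _)
    have hAE : Af ≤ C₂ ^ 2 * ((1 / 2) * Eg) := by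
      have h := hgap g hgsupp
      rw [heqA2, heqE] at h
      have hE0 : 0 ≤ (1 / 2) * Eg := by linarith
      have h2 := mul_self_le_mul_self (Real.sqrt_nonneg Af) h
      rw [Real.mul_self_sqrt hAf0] at h2
      calc Af ≤ (C₂ * Real.sqrt ((1 / 2) * Eg)) * (C₂ * Real.sqrt ((1 / 2) * Eg)) := h2
        _ = C₂ ^ 2 * (Real.sqrt ((1 / 2) * Eg) * Real.sqrt ((1 / 2) * Eg)) := by ring
        _ = C₂ ^ 2 * ((1 / 2) * Eg) := by rw [Real.mul_self_sqrt hE0]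
    refine ⟨heqA ▸ hAf0, heqB ▸ (by linarith : (0:ℝ) ≤ (1/2) * Bs), by
        rw [heqA, heqB]; exact hupper, ?_, ?_⟩
    · -- small exponent case
      intro hp2
      rw [heqA, heqB]
      have hr1 : r ≤ 1 := by rw [hrdef]; linarith
      have hEgBs : Eg ≤ Bs := by
        apply Finset.sum_le_sum
        intro x _
        apply Finset.sum_le_sum
        intro y _
        apply mul_le_mul_of_nonneg_left _ (hnn x y)
        have := sq_rpow_sub_le_small (a := f x) (b := f y) hr0 hr1
        calc (g x - g y) ^ 2 = (|f x| ^ r - |f y| ^ r) ^ 2 := by rw [hgdef]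
          _ ≤ |f x - f y| ^ (r * 2) := this
          _ = |f x - f y| ^ p := by rw [hrdef]; ring_nf
      calc Af ≤ C₂ ^ 2 * ((1 / 2) * Eg) := hAE
        _ ≤ C₂ ^ 2 * ((1 / 2) * Bs) := by nlinarith [sq_nonneg C₂]
    · -- large exponent case
      intro hp2
      rw [heqA, heqB]
      have hp2' : (0:ℝ) < p - 2 := by linarith
      have hr1 : 1 ≤ r := by rw [hrdef]; linarith
      set e : ℝ := (p - 2) / p with hedef
      set T1 : ℝ := ∑ x ∈ N, ∑ y ∈ N, μ x y * |f x| ^ (p - 2) * |f x - f y| ^ 2 with hT1def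
      have hT10 : 0 ≤ T1 :=
        Finset.sum_nonneg fun x _ => Finset.sum_nonneg fun y _ =>
          mul_nonneg (mul_nonneg (hnn x y) (Real.rpow_nonneg (abs_nonneg _) _)) (sq_nonneg _)
      have hEgle : Eg ≤ r ^ 2 * T1
          + r ^ 2 * (∑ x ∈ N, ∑ y ∈ N, μ x y * |f y| ^ (p - 2) * |f x - f y| ^ 2) := by
        have h1 : Eg ≤ ∑ x ∈ N, ∑ y ∈ N,
            (r ^ 2 * (μ x y * |f x| ^ (p - 2) * |f x - f y| ^ 2)
              + r ^ 2 * (μ x y * |f y| ^ (p - 2) * |f x - f y| ^ 2)) := by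
          apply Finset.sum_le_sum
          intro x _
          apply Finset.sum_le_sum
          intro y _
          have hb := sq_rpow_sub_le_big (u := |f x|) (v := |f y|) (abs_nonneg _) (abs_nonneg _) hr1
          have hre : 2 * r - 2 = p - 2 := by rw [hrdef]; ring
          rw [hre] at hb
          have habs2 : (|f x| - |f y|) ^ 2 ≤ |f x - f y| ^ 2 := by
            have h := abs_abs_sub_abs_le_abs_sub (f x) (f y)
            calc (|f x| - |f y|) ^ 2 = (abs (|f x| - |f y|)) ^ 2 := (sq_abs _).symm
              _ ≤ |f x - f y| ^ 2 := by nlinarith [abs_nonneg (|f x| - |f y|)]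
          have hfac : 0 ≤ r ^ 2 * (|f x| ^ (p - 2) + |f y| ^ (p - 2)) := by
            have := Real.rpow_nonneg (abs_nonneg (f x)) (p - 2)
            have := Real.rpow_nonneg (abs_nonneg (f y)) (p - 2)
            positivity
          have hgle : (g x - g y) ^ 2
              ≤ r ^ 2 * (|f x| ^ (p - 2) + |f y| ^ (p - 2)) * |f x - f y| ^ 2 := by
            calc (g x - g y) ^ 2 = (|f x| ^ r - |f y| ^ r) ^ 2 := by rw [hgdef]
              _ ≤ r ^ 2 * (|f x| ^ (p - 2) + |f y| ^ (p - 2)) * (|f x| - |f y|) ^ 2 := hb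
              _ ≤ r ^ 2 * (|f x| ^ (p - 2) + |f y| ^ (p - 2)) * |f x - f y| ^ 2 :=
                  mul_le_mul_of_nonneg_left habs2 hfac
          calc μ x y * (g x - g y) ^ 2
              ≤ μ x y * (r ^ 2 * (|f x| ^ (p - 2) + |f y| ^ (p - 2)) * |f x - f y| ^ 2) :=
                mul_le_mul_of_nonneg_left hgle (hnn x y)
            _ = r ^ 2 * (μ x y * |f x| ^ (p - 2) * |f x - f y| ^ 2)
                + r ^ 2 * (μ x y * |f y| ^ (p - 2) * |f x - f y| ^ 2) := by ring
        calc Eg ≤ _ := h1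
          _ = r ^ 2 * T1
              + r ^ 2 * (∑ x ∈ N, ∑ y ∈ N, μ x y * |f y| ^ (p - 2) * |f x - f y| ^ 2) := by
            simp only [Finset.sum_add_distrib, ← Finset.mul_sum, hT1def]
      have hswap : (∑ x ∈ N, ∑ y ∈ N, μ x y * |f y| ^ (p - 2) * |f x - f y| ^ 2) = T1 := by
        rw [Finset.sum_comm, hT1def]
        refine Finset.sum_congr rfl fun a _ => Finset.sum_congr rfl fun b _ => ?_
        rw [hsymm b a, abs_sub_comm (f b) (f a)]
      have hEgle2 : Eg ≤ 2 * r ^ 2 * T1 := by rw [hswap] at hEgle; linarith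
      -- Hölder
      set P : ℝ := p / (p - 2) with hPdef
      set Q : ℝ := p / 2 with hQdef
      have hP1 : 1 < P := (one_lt_div hp2').mpr (by linarith)
      have hconj : Real.HolderConjugate P Q := by
        constructor
        · rw [inv_one, hPdef, hQdef, inv_div, inv_div, ← add_div,
            div_eq_one_iff_eq hp0.ne']
          ring
        · linarith
        · rw [hQdef]; positivity
      set u : V × V → ℝ := fun z => μ z.1 z.2 ^ ((p - 2) / p) * |f z.1| ^ (p - 2) with hudef
      set v : V × V → ℝ := fun z => μ z.1 z.2 ^ (2 / p) * |f z.1 - f z.2| ^ 2 with hvdef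
      have hu : ∀ z ∈ N ×ˢ N, 0 ≤ u z := fun z _ =>
        mul_nonneg (Real.rpow_nonneg (hnn _ _) _) (Real.rpow_nonneg (abs_nonneg _) _)
      have hv : ∀ z ∈ N ×ˢ N, 0 ≤ v z := fun z _ =>
        mul_nonneg (Real.rpow_nonneg (hnn _ _) _) (sq_nonneg _)
      have hHold := Real.inner_le_Lp_mul_Lq_of_nonneg (N ×ˢ N) hconj hu hv
      have hsum1 : (p - 2) / p + 2 / p = 1 := by field_simp; ring
      have hμ1 : ∀ a b : V, μ a b ^ ((p - 2) / p) * μ a b ^ (2 / p) = μ a b := by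
        intro a b
        rw [← Real.rpow_add' (hnn a b) (by rw [hsum1]; norm_num), hsum1, Real.rpow_one]
      have hL : (∑ z ∈ N ×ˢ N, u z * v z) = T1 := by
        calc (∑ z ∈ N ×ˢ N, u z * v z)
            = ∑ z ∈ N ×ˢ N, μ z.1 z.2 * |f z.1| ^ (p - 2) * |f z.1 - f z.2| ^ 2 := by
              refine Finset.sum_congr rfl fun z _ => ?_
              calc u z * v z
                  = (μ z.1 z.2 ^ ((p - 2) / p) * μ z.1 z.2 ^ (2 / p))
                    * (|f z.1| ^ (p - 2) * |f z.1 - f z.2| ^ 2) := by rw [hudef, hvdef]; ring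
                _ = μ z.1 z.2 * |f z.1| ^ (p - 2) * |f z.1 - f z.2| ^ 2 := by
                    rw [hμ1]; ring
          _ = T1 := by rw [Finset.sum_product]
      have he1 : (p - 2) / p * P = 1 := by rw [hPdef]; field_simp
      have he2 : (p - 2) * P = p := by rw [hPdef]; field_simp
      have huP : ∀ z ∈ N ×ˢ N, u z ^ P = μ z.1 z.2 * |f z.1| ^ p := by
        intro z _
        rw [hudef]
        rw [Real.mul_rpow (Real.rpow_nonneg (hnn _ _) _) (Real.rpow_nonneg (abs_nonneg _) _),
          ← Real.rpow_mul (hnn _ _), ← Real.rpow_mul (abs_nonneg _), he1, he2, Real.rpow_one]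
      have hf1 : 2 / p * Q = 1 := by rw [hQdef]; field_simp
      have hvQ : ∀ z ∈ N ×ˢ N, v z ^ Q = μ z.1 z.2 * |f z.1 - f z.2| ^ p := by
        intro z _
        have h2Q : ((2:ℕ):ℝ) * Q = p := by rw [hQdef]; push_cast; ring
        rw [hvdef]
        rw [Real.mul_rpow (Real.rpow_nonneg (hnn _ _) _) (sq_nonneg _),
          ← Real.rpow_mul (hnn _ _), hf1, Real.rpow_one,
          ← Real.rpow_natCast (|f z.1 - f z.2|) 2, ← Real.rpow_mul (abs_nonneg _), h2Q]
      have hSp : (∑ z ∈ N ×ˢ N, u z ^ P) = ∑ x ∈ N, ∑ y ∈ N, μ x y * |f x| ^ p := by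
        rw [Finset.sum_congr rfl huP, Finset.sum_product]
      have hSq : (∑ z ∈ N ×ˢ N, v z ^ Q) = Bs := by
        rw [Finset.sum_congr rfl hvQ, hBsdef, Finset.sum_product]
      rw [hL, hSp, hSq] at hHold
      have h1P : 1 / P = e := by rw [hPdef, hedef, one_div, inv_div]
      have h1Q : 1 / Q = 2 / p := by rw [hQdef, one_div, inv_div]
      rw [h1P, h1Q] at hHold
      have hSp0 : 0 ≤ ∑ x ∈ N, ∑ y ∈ N, μ x y * |f x| ^ p :=
        Finset.sum_nonneg fun x _ => Finset.sum_nonneg fun y _ =>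
          mul_nonneg (hnn x y) (Real.rpow_nonneg (abs_nonneg _) _)
      have he0 : 0 ≤ e := by rw [hedef]; positivity
      have hT1le : T1 ≤ (M' * Af) ^ e * Bs ^ (2 / p) := by
        have hmono : (∑ x ∈ N, ∑ y ∈ N, μ x y * |f x| ^ p) ^ e ≤ (M' * Af) ^ e :=
          Real.rpow_le_rpow hSp0 hS1 he0
        calc T1 ≤ (∑ x ∈ N, ∑ y ∈ N, μ x y * |f x| ^ p) ^ e * Bs ^ (2 / p) := hHold
          _ ≤ (M' * Af) ^ e * Bs ^ (2 / p) :=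
            mul_le_mul_of_nonneg_right hmono (Real.rpow_nonneg hBs0 _)
      have hBsplit : Bs ^ (2 / p) = 2 ^ (2 / p) * ((1 / 2) * Bs) ^ (2 / p) := by
        calc Bs ^ (2 / p) = ((2:ℝ) * ((1 / 2) * Bs)) ^ (2 / p) := by congr 1; ring
          _ = 2 ^ (2 / p) * ((1 / 2) * Bs) ^ (2 / p) :=
            Real.mul_rpow (by norm_num) (by linarith)
      calc Af ≤ C₂ ^ 2 * ((1 / 2) * Eg) := hAE
        _ ≤ C₂ ^ 2 * ((1 / 2) * (2 * r ^ 2 * T1)) := by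
            have hC : (0:ℝ) ≤ C₂ ^ 2 := sq_nonneg _
            have h' : (1 / 2) * Eg ≤ (1 / 2) * (2 * r ^ 2 * T1) := by linarith
            exact mul_le_mul_of_nonneg_left h' hC
        _ = C₂ ^ 2 * r ^ 2 * T1 := by ring
        _ ≤ C₂ ^ 2 * r ^ 2 * ((M' * Af) ^ e * Bs ^ (2 / p)) := by
            have : (0:ℝ) ≤ C₂ ^ 2 * r ^ 2 := by positivity
            exact mul_le_mul_of_nonneg_left hT1le this
        _ = C₂ ^ 2 * r ^ 2 * (M' ^ e * Af ^ e * (2 ^ (2 / p) * ((1 / 2) * Bs) ^ (2 / p))) := by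
            rw [Real.mul_rpow hM'pos.le hAf0, hBsplit]
        _ = K * Af ^ e * ((1 / 2) * Bs) ^ (2 / p) := by rw [hKdef, hedef]; ring
  -- conclude
  rcases le_or_gt p 2 with h2 | h2
  · refine ⟨((C₂ ^ 2) ^ (1 / p))⁻¹, (2 ^ p * M') ^ (1 / p), by positivity, by positivity, ?_⟩
    intro f hf
    obtain ⟨hA0, hB0, hup, hlow, -⟩ := main f hf
    constructor
    · have h1 := hlow h2
      have h3 : (∑' x, |f x| ^ p * ν x) ^ (1 / p)
          ≤ (C₂ ^ 2) ^ (1 / p) * ((1 / 2) * ∑' x, ∑' y, μ x y * |f x - f y| ^ p) ^ (1 / p) := by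
        rw [← Real.mul_rpow (by positivity) hB0]
        exact Real.rpow_le_rpow hA0 h1 (by positivity)
      have hk : (0:ℝ) < (C₂ ^ 2) ^ (1 / p) := by positivity
      calc ((C₂ ^ 2) ^ (1 / p))⁻¹ * (∑' x, |f x| ^ p * ν x) ^ (1 / p)
          ≤ ((C₂ ^ 2) ^ (1 / p))⁻¹ * ((C₂ ^ 2) ^ (1 / p)
              * ((1 / 2) * ∑' x, ∑' y, μ x y * |f x - f y| ^ p) ^ (1 / p)) :=
            mul_le_mul_of_nonneg_left h3 (by positivity)
        _ = ((1 / 2) * ∑' x, ∑' y, μ x y * |f x - f y| ^ p) ^ (1 / p) := by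
            rw [← mul_assoc, inv_mul_cancel₀ hk.ne', one_mul]
    · calc ((1 / 2) * ∑' x, ∑' y, μ x y * |f x - f y| ^ p) ^ (1 / p)
          ≤ (2 ^ p * M' * (∑' x, |f x| ^ p * ν x)) ^ (1 / p) :=
            Real.rpow_le_rpow hB0 hup (by positivity)
        _ = (2 ^ p * M') ^ (1 / p) * (∑' x, |f x| ^ p * ν x) ^ (1 / p) :=
            Real.mul_rpow (by positivity) hA0
  · refine ⟨(K ^ (1 / 2 : ℝ))⁻¹, (2 ^ p * M') ^ (1 / p), by positivity, by positivity, ?_⟩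
    intro f hf
    obtain ⟨hA0, hB0, hup, -, hlow⟩ := main f hf
    constructor
    · set A : ℝ := ∑' x, |f x| ^ p * ν x with hA
      set B : ℝ := (1 / 2) * ∑' x, ∑' y, μ x y * |f x - f y| ^ p with hB
      have h1 := hlow h2
      rcases eq_or_lt_of_le hA0 with h0 | hApos
      · rw [← h0, Real.zero_rpow (by positivity : (1:ℝ)/p ≠ 0), mul_zero]
        exact Real.rpow_nonneg hB0 _
      · -- A > 0
        have hsplit : A = A ^ ((p - 2) / p) * A ^ (2 / p) := by
          rw [← Real.rpow_add hApos]
          rw [show (p - 2) / p + 2 / p = 1 by field_simp; ring]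
          exact (Real.rpow_one A).symm
        have hpow : A ^ (2 / p) ≤ K * B ^ (2 / p) := by
          have hd : (0:ℝ) < A ^ ((p - 2) / p) := Real.rpow_pos_of_pos hApos _
          have h2' : A ^ ((p - 2) / p) * A ^ (2 / p)
              ≤ A ^ ((p - 2) / p) * (K * B ^ (2 / p)) := by
            calc A ^ ((p - 2) / p) * A ^ (2 / p) = A := hsplit.symm
              _ ≤ K * A ^ ((p - 2) / p) * B ^ (2 / p) := h1
              _ = A ^ ((p - 2) / p) * (K * B ^ (2 / p)) := by ring
          exact le_of_mul_le_mul_left h2' hd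
        have h3 : (A ^ (2 / p)) ^ ((1:ℝ)/2) ≤ (K * B ^ (2 / p)) ^ ((1:ℝ)/2) :=
          Real.rpow_le_rpow (Real.rpow_nonneg hA0 _) hpow (by norm_num)
        have h4 : (A ^ (2 / p)) ^ ((1:ℝ)/2) = A ^ (1 / p) := by
          rw [← Real.rpow_mul hA0]
          norm_num
        have h5 : (K * B ^ (2 / p)) ^ ((1:ℝ)/2)
            = K ^ ((1:ℝ)/2) * B ^ (1 / p) := by
          rw [Real.mul_rpow hKpos.le (Real.rpow_nonneg hB0 _), ← Real.rpow_mul hB0]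
          norm_num
        rw [h4, h5] at h3
        have hk : (0:ℝ) < K ^ ((1:ℝ)/2) := by positivity
        calc (K ^ ((1:ℝ)/2))⁻¹ * A ^ (1 / p)
            ≤ (K ^ ((1:ℝ)/2))⁻¹ * (K ^ ((1:ℝ)/2) * B ^ (1 / p)) :=
              mul_le_mul_of_nonneg_left h3 (by positivity)
          _ = B ^ (1 / p) := by rw [← mul_assoc, inv_mul_cancel₀ hk.ne', one_mul]
    · calc ((1 / 2) * ∑' x, ∑' y, μ x y * |f x - f y| ^ p) ^ (1 / p)
          ≤ (2 ^ p * M' * (∑' x, |f x| ^ p * ν x)) ^ (1 / p) :=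
            Real.rpow_le_rpow hB0 hup (by positivity)
        _ = (2 ^ p * M') ^ (1 / p) * (∑' x, |f x| ^ p * ν x) ^ (1 / p) :=
            Real.mul_rpow (by positivity) hA0
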